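/- Let α ∈ ℝⁿ be Diophantine with constants C > 0, γ > n−1. Let f : ℤⁿ → ℂ be a function (the Fourier coefficients of a smooth function) with f(0) = 0, and suppose for every s > 0 there is M_s with |f(k)| ≤ M_s ‖k‖^{−s} for all nonzero k. Define h(k) = f(k) / (2πi α·k) for k ≠ 0 and h(0) = 0. Then for every r > 0, the function k ↦ ‖k‖^r |h(k)| is bounded by (2πC)^{−1} M_{r+γ}; in particular h is the sequence of Fourier coefficients of a smooth function solving the cohomological equation ∑ α_i ∂/∂x_i u = f on the torus 𝕋ⁿ. -/

import Mathlib

open Real in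
theorem stmt_8 {n : ℕ} (α : Fin n → ℝ) (C γ : ℝ)
    (hC : 0 < C) (hγ : (n : ℝ) - 1 < γ)
    (hdio : ∀ k : Fin n → ℤ, k ≠ 0 →
      C * ‖(fun i => (k i : ℝ))‖ ^ (-γ) ≤ |∑ i, α i * (k i : ℝ)|)
    (f : (Fin n → ℤ) → ℂ) (hf0 : f 0 = 0)
    (M : ℝ → ℝ)
    (hM : ∀ s > (0 : ℝ), ∀ k : Fin n → ℤ, k ≠ 0 →
      ‖f k‖ ≤ M s * ‖(fun i => (k i : ℝ))‖ ^ (-s))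
    (h : (Fin n → ℤ) → ℂ) (hh0 : h 0 = 0)
    (hhdef : ∀ k : Fin n → ℤ, k ≠ 0 →
      h k = f k / (2 * Real.pi * Complex.I * (∑ i, α i * (k i : ℝ)))) :
    ∀ r > (0 : ℝ), ∀ k : Fin n → ℤ, k ≠ 0 →
      ‖(fun i => (k i : ℝ))‖ ^ r * ‖h k‖ ≤
        (2 * Real.pi * C)⁻¹ * M (r + γ) := by
  intro r hr k hk
  set x := ‖(fun i => (k i : ℝ))‖ with hxdef
  have hx : 0 < x := by
    rw [hxdef, norm_pos_iff]
    intro hzero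
    apply hk
    funext i
    have := congrFun hzero i
    simpa using this
  set D := ∑ i, α i * (k i : ℝ) with hDdef
  have hDio := hdio k hk
  have hxg : 0 < x ^ (-γ) := Real.rpow_pos_of_pos hx _
  have hDpos : 0 < |D| := lt_of_lt_of_le (by positivity) hDio
  have hn : (1:ℝ) ≤ (n:ℝ) := by
    by_contra hcon
    have hn0 : n = 0 := by
      push_neg at hcon
      exact_mod_cast Nat.lt_one_iff.mp (by exact_mod_cast hcon)
    subst hn0
    exact hk (funext fun i => i.elim0)
  have hγ0 : 0 < γ := by linarith
  have hfb := hM (r + γ) (by linarith) k hk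
  have hMpos : 0 ≤ M (r + γ) := by
    nlinarith [norm_nonneg (f k), Real.rpow_pos_of_pos hx (-(r+γ))]
  have habs : ‖(2 * (Real.pi : ℂ) * Complex.I * ((D : ℝ) : ℂ))‖
      = 2 * Real.pi * |D| := by
    simp [abs_of_pos Real.pi_pos]
  rw [hhdef k hk, norm_div, habs]
  rw [mul_div_assoc' , div_le_iff₀ (by positivity)]
  have hxr : 0 ≤ x ^ r := le_of_lt (Real.rpow_pos_of_pos hx _)
  have key : x ^ r * ‖f k‖ ≤ M (r + γ) * x ^ (-γ) := by
    have h1 : x ^ r * ‖f k‖ ≤ x ^ r * (M (r + γ) * x ^ (-(r + γ))) :=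
      mul_le_mul_of_nonneg_left hfb hxr
    have h2 : x ^ r * x ^ (-(r + γ)) = x ^ (-γ) := by
      rw [← Real.rpow_add hx]; ring_nf
    nlinarith [h1, h2]
  have h3 : M (r + γ) * (C * x ^ (-γ)) ≤ M (r + γ) * |D| :=
    mul_le_mul_of_nonneg_left hDio hMpos
  have hπ := Real.pi_pos
  have heq : (2 * Real.pi * C)⁻¹ * M (r + γ) * (2 * Real.pi * |D|)
      = C⁻¹ * (M (r + γ) * |D|) := by
    field_simp
  rw [heq]
  calc x ^ r * ‖f k‖ ≤ M (r + γ) * x ^ (-γ) := key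
    _ = C⁻¹ * (M (r + γ) * (C * x ^ (-γ))) := by field_simp
    _ ≤ C⁻¹ * (M (r + γ) * |D|) := by
        apply mul_le_mul_of_nonneg_left h3 (by positivity)
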